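/- Let k ≥ 2, n, m, p be positive integers with p > ⌈n/m⌉. Then there exists a complete n×n×⋯×n k-partite multigraph with a shuffle-preserved edge coloring using at most m colors, containing no monochromatic complete p×p×⋯×p k-partite subgraph. -/

import Mathlib

/-- If p > ⌈n/m⌉, there is a shuffle-preserved m-coloring of a complete
n×⋯×n k-partite multigraph with no monochromatic complete p×⋯×p k-partite
subgraph. -/
theorem exists_kpartite_coloring_no_mono
    (k n m p : ℕ) (hk : 2 ≤ k) (hn : 0 < n) (hm : 0 < m) (hp : 0 < p)
    (hgt : (n + m - 1) / m < p) :
    ∃ η : (Fin k × Fin n) → (Fin k × Fin n) → Set ℕ,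
      (∀ u v, η u v = η v u) ∧
      (∀ u v, u.1 ≠ v.1 → (η u v).Nonempty) ∧
      (∃ s : Finset ℕ, s.card ≤ m ∧ ∀ u v c, c ∈ η u v → c ∈ s) ∧
      (∀ (c : ℕ) u v, (∃ w, w.1 ≠ u.1 ∧ c ∈ η u w) →
        (∃ w, w.1 ≠ v.1 ∧ c ∈ η v w) → u.1 ≠ v.1 → c ∈ η u v) ∧
      ¬ ∃ (c : ℕ) (A : Fin k → Finset (Fin n)),
          (∀ i, (A i).card = p) ∧
          ∀ i j, i ≠ j → ∀ a ∈ A i, ∀ b ∈ A j, c ∈ η (i, a) (j, b) := by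
  refine ⟨fun u v =>
    if u.1.val = 0 then (if v.1.val = 0 then ∅ else {u.2.val % m})
    else if v.1.val = 0 then {v.2.val % m} else {c | c < m}, ?_, ?_, ?_, ?_, ?_⟩
  · intro u v
    by_cases hu : u.1.val = 0 <;> by_cases hv : v.1.val = 0 <;> simp [hu, hv]
  · intro u v huv
    have : u.1.val ≠ v.1.val := fun h => huv (Fin.ext h)
    by_cases hu : u.1.val = 0 <;> by_cases hv : v.1.val = 0 <;>
      simp_all [Set.Nonempty]
    exact ⟨0, hm⟩
  · refine ⟨Finset.range m, le_of_eq (Finset.card_range m), ?_⟩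
    intro u v c hc
    rw [Finset.mem_range]
    by_cases hu : u.1.val = 0 <;> by_cases hv : v.1.val = 0 <;>
      simp_all [Nat.mod_lt _ hm]
  · rintro c u v ⟨w, hw, hcw⟩ ⟨w', hw', hcw'⟩ huv
    have hne : u.1.val ≠ v.1.val := fun h => huv (Fin.ext h)
    have hwu : w.1.val ≠ u.1.val := fun h => hw (Fin.ext h)
    have hwv : w'.1.val ≠ v.1.val := fun h => hw' (Fin.ext h)
    have hcm : c < m := by
      by_cases hu : u.1.val = 0 <;> by_cases hww : w.1.val = 0 <;>
        simp_all [Nat.mod_lt _ hm]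
    by_cases hu : u.1.val = 0
    · have hww : w.1.val ≠ 0 := by omega
      have hvv : v.1.val ≠ 0 := by omega
      simp_all
    · by_cases hv : v.1.val = 0
      · have hww : w'.1.val ≠ 0 := by omega
        simp_all
      · simp_all
  · rintro ⟨c, A, hcard, hcol⟩
    have h0 : (0 : ℕ) < k := by omega
    have h1 : (1 : ℕ) < k := by omega
    set i0 : Fin k := ⟨0, h0⟩
    set i1 : Fin k := ⟨1, h1⟩
    have hne : i0 ≠ i1 := by simp [i0, i1, Fin.ext_iff]
    obtain ⟨b, hb⟩ : (A i1).Nonempty := Finset.card_pos.mp (by rw [hcard]; exact hp)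
    have hmod : ∀ a ∈ A i0, a.val % m = c := by
      intro a ha
      have := hcol i0 i1 hne a ha b hb
      simp [i0, i1] at this
      exact this.symm
    have hinj : Set.InjOn (fun a : Fin n => a.val / m) (A i0) := by
      intro a ha b' hb' h
      simp only at h
      have h1 := hmod a ha
      have h2 := hmod b' hb'
      have h' : a.val / m = b'.val / m := h
      apply Fin.ext
      conv_lhs => rw [← Nat.div_add_mod a.val m]
      conv_rhs => rw [← Nat.div_add_mod b'.val m]
      rw [h', h1, h2]
    have hle : (A i0).card ≤ (Finset.range ((n + m - 1) / m)).card := by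
      apply Finset.card_le_card_of_injOn _ _ hinj
      intro a _
      rw [Finset.mem_coe, Finset.mem_range]
      have h1 : a.val / m ≤ (n - 1) / m := Nat.div_le_div_right (by omega)
      have h2 : (n - 1 + m) / m = (n - 1) / m + 1 := Nat.add_div_right _ hm
      have h3 : n + m - 1 = n - 1 + m := by omega
      rw [h3, h2]
      exact Nat.lt_succ_of_le h1
    rw [hcard, Finset.card_range] at hle
    omega
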